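/- Let q ≥ 2 and let m be an integer with m ≥ 5 or m = 3. For every x ∈ F(O,ℚ), W(ξ_x) = x; in particular, the linear map W : F(P,ℚ) → F(O,ℚ) is surjective. -/

import Mathlib

/-- Partitions of `Fin m` are represented as finsets of finsets. -/
abbrev Ptn (m : ℕ) := Finset (Finset (Fin m))

/-- `α` is a partition of `Fin m`: all classes are nonempty and every element
belongs to exactly one class. -/
def IsPartition {m : ℕ} (α : Ptn m) : Prop :=
  (∀ c ∈ α, c.Nonempty) ∧ ∀ i : Fin m, ∃! c, c ∈ α ∧ i ∈ c

/-- `P`: the set of partitions of `M = Fin m` into at most `q` nonempty classes. -/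
def Pset (m q : ℕ) : Set (Ptn m) :=
  {α | IsPartition α ∧ α.card ≤ q}

/-- `P₂`: the partitions of the form `{{i,j}, M ∖ {i,j}}` for 2-element subsets `{i,j}`. -/
def P2set (m : ℕ) : Set (Ptn m) :=
  {α | ∃ p : Finset (Fin m), p.card = 2 ∧ α = {p, pᶜ}}

/-- `O` as a set: the 2-element subsets of `M = Fin m`. -/
def Oset (m : ℕ) : Set (Finset (Fin m)) := {p | p.card = 2}

/-- `O` as a type: the 2-element subsets of `M = Fin m`. -/
abbrev OO (m : ℕ) := {p : Finset (Fin m) // p.card = 2}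

/-- `P` as a type. -/
abbrev PP (m q : ℕ) := {α : Ptn m // α ∈ Pset m q}

noncomputable instance (m q : ℕ) : Fintype (PP m q) := Fintype.ofFinite _

/-- The canonical action of `S(M)` on partitions: `g({c₁,…,cₜ}) = {g(c₁),…,g(cₜ)}`. -/
def permPart {m : ℕ} (g : Equiv.Perm (Fin m)) (α : Ptn m) : Ptn m :=
  α.image fun c => c.image g

/-- The canonical action of `S(M)` on subsets of `M`. -/
def permPair {m : ℕ} (g : Equiv.Perm (Fin m)) (p : Finset (Fin m)) : Finset (Fin m) :=
  p.image g

/-- `H` is closed under the action `act` on `S` if every `g` that maps each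
`H`-orbit of `S` onto itself belongs to `H`. -/
def ClosedUnder {m : ℕ} {X : Type*} (act : Equiv.Perm (Fin m) → X → X) (S : Set X)
    (H : Set (Equiv.Perm (Fin m))) : Prop :=
  ∀ g : Equiv.Perm (Fin m), (∀ x ∈ S, ∃ h ∈ H, act g x = act h x) → g ∈ H

section Code

variable {m n : ℕ} {A : Type*} [Fintype A] [DecidableEq A]

/-- A map `h : Aⁿ → Aⁿ` is monomial if `h(a) = (σ₁(a_{π(1)}), …, σₙ(a_{π(n)}))`
for a permutation `π ∈ Sₙ` and permutations `σ₁,…,σₙ` of `A`. -/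
def IsMonomial (h : (Fin n → A) → (Fin n → A)) : Prop :=
  ∃ (π : Equiv.Perm (Fin n)) (σ : Fin n → Equiv.Perm A),
    ∀ (a : Fin n → A) (k : Fin n), h a k = σ k (a (π k))

/-- `Iso(C)`: the permutations `g` of the messages such that `λ ∘ g ∘ λ⁻¹` is a
Hamming isometry of the code encoded by `lam`. -/
def IsoSet (lam : Fin m → Fin n → A) : Set (Equiv.Perm (Fin m)) :=
  {g | ∀ i j : Fin m, hammingDist (lam (g i)) (lam (g j)) = hammingDist (lam i) (lam j)}

/-- `Mon(C)`: the elements of `Iso(C)` such that `λ ∘ g ∘ λ⁻¹` extends to a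
monomial map of `Aⁿ`. -/
def MonSet (lam : Fin m → Fin n → A) : Set (Equiv.Perm (Fin m)) :=
  {g | g ∈ IsoSet lam ∧
    ∃ h : (Fin n → A) → (Fin n → A), IsMonomial h ∧ ∀ i : Fin m, h (lam i) = lam (g i)}

/-- `Ψ(x) = {x⁻¹(a) : a ∈ A} ∖ {∅}`, the partition of `M` induced by `x : M → A`. -/
def PsiF (x : Fin m → A) : Ptn m :=
  (Finset.univ.image fun a : A => Finset.univ.filter fun i : Fin m => x i = a).erase ∅

/-- The multiplicity function `η_λ(α) = |{k : Ψ(λ_k) = α}|`. -/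
def eta (lam : Fin m → Fin n → A) (α : Ptn m) : ℚ :=
  (((Finset.univ : Finset (Fin n)).filter fun k => PsiF (fun i => lam i k) = α).card : ℚ)

/-- The multiplicity function, restricted to `P`. -/
def etaP (q : ℕ) (lam : Fin m → Fin n → A) : PP m q → ℚ := fun α => eta lam α.1

end Code

open Classical in
/-- `Δ_α({i,j}) = 0` if `i` and `j` lie in the same class of `α`, and `1` otherwise. -/
noncomputable def Delta {m q : ℕ} (α : PP m q) (p : OO m) : ℚ :=
  if ∃ c ∈ α.1, p.1 ⊆ c then 0 else 1

/-- The linear map `W : F(P,ℚ) → F(O,ℚ)`, `W(η)(p) = Σ_{α∈P} η(α)Δ_α(p)`. -/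
noncomputable def WLin (m q : ℕ) : (PP m q → ℚ) →ₗ[ℚ] (OO m → ℚ) where
  toFun η := fun p => ∑ α : PP m q, η α * Delta α p
  map_add' x y := by
    funext p
    simp [add_mul, Finset.sum_add_distrib]
  map_smul' c x := by
    funext p
    simp [Finset.mul_sum, mul_assoc]

/-- The matrix `B`: `B_{p,t} = 1` if `|p ∩ t| = 1`, and `0` otherwise. -/
def Bmat (m : ℕ) : Matrix (OO m) (OO m) ℚ :=
  Matrix.of fun p t => if (p.1 ∩ t.1).card = 1 then 1 else 0

/-- The matrix `D`: `2(m−2)(m−4)·D_{p,t}` equals `−m²+8m−14` if `p = t`,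
`m−4` if `|p∩t| = 1`, and `−2` if `p ∩ t = ∅`. -/
def Dmat (m : ℕ) : Matrix (OO m) (OO m) ℚ :=
  Matrix.of fun p t =>
    (if p = t then -(m : ℚ) ^ 2 + 8 * m - 14
      else if (p.1 ∩ t.1).card = 1 then (m : ℚ) - 4 else -2) /
      (2 * ((m : ℚ) - 2) * ((m : ℚ) - 4))

/-- `ξ_x = Σ_{r∈O} x(r) Σ_{p∈O} D_{r,p} · id_{{p, M∖p}}`. -/
noncomputable def xi (m q : ℕ) (x : OO m → ℚ) : PP m q → ℚ := fun α =>
  ∑ r : OO m, x r * ∑ p : OO m, Dmat m r p * (if α.1 = ({p.1, p.1ᶜ} : Ptn m) then 1 else 0)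

/-- `ζ_α = id_α − ξ_{Δ_α}`. -/
noncomputable def zeta (m q : ℕ) (α : PP m q) : PP m q → ℚ :=
  (fun β => if β = α then 1 else 0) - xi m q fun p => Delta α p

/-- `V₀`: the functions in `F(P,ℚ)` vanishing on `P ∖ P₂`. -/
def V0 (m q : ℕ) : Set (PP m q → ℚ) :=
  {η | ∀ α : PP m q, (α : Ptn m) ∉ P2set m → η α = 0}

open Classical in
/-- `id_{P₂} = Σ_{α∈P₂} id_α`. -/
noncomputable def idP2 (m q : ℕ) : PP m q → ℚ := fun α =>
  if (α : Ptn m) ∈ P2set m then 1 else 0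

theorem permPart_mem_Pset {m q : ℕ} (g : Equiv.Perm (Fin m)) {α : Ptn m}
    (hα : α ∈ Pset m q) : permPart g α ∈ Pset m q := by
  obtain ⟨⟨hne, huniq⟩, hcard⟩ := hα
  refine ⟨⟨?_, ?_⟩, le_trans Finset.card_image_le hcard⟩
  · intro c hc
    simp only [permPart, Finset.mem_image] at hc
    obtain ⟨d, hd, rfl⟩ := hc
    exact (hne d hd).image g
  · intro i
    obtain ⟨c, ⟨hc, hic⟩, hun⟩ := huniq (g.symm i)
    refine ⟨c.image g, ⟨?_, ?_⟩, ?_⟩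
    · simp only [permPart, Finset.mem_image]
      exact ⟨c, hc, rfl⟩
    · exact Finset.mem_image.2 ⟨g.symm i, hic, g.apply_symm_apply i⟩
    · rintro d ⟨hd, hid⟩
      simp only [permPart, Finset.mem_image] at hd
      obtain ⟨e, he, rfl⟩ := hd
      rw [Finset.mem_image] at hid
      obtain ⟨j, hj, hji⟩ := hid
      have hjs : j = g.symm i := by
        apply g.injective
        rw [hji, g.apply_symm_apply]
      subst hjs
      rw [hun e ⟨he, hj⟩]

/-- The action of `S(M)` on `P`. -/
def permPP {m q : ℕ} (g : Equiv.Perm (Fin m)) (α : PP m q) : PP m q :=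
  ⟨permPart g α.1, permPart_mem_Pset g α.2⟩

/-- The action of `S(M)` on `F(P,ℚ)`: `g(η)(α) = η(g⁻¹(α))`. -/
def permF {m q : ℕ} (g : Equiv.Perm (Fin m)) (η : PP m q → ℚ) : PP m q → ℚ :=
  fun α => η (permPP g⁻¹ α)

/-- `Stab(η) = {g ∈ S(M) : g(η) = η}`. -/
def StabSet {m q : ℕ} (η : PP m q → ℚ) : Set (Equiv.Perm (Fin m)) :=
  {g | permF g η = η}

/-- `Stab_W(η) = {g ∈ S(M) : W(g(η)) = W(η)}`. -/
def StabWSet (m q : ℕ) (η : PP m q → ℚ) : Set (Equiv.Perm (Fin m)) :=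
  {g | WLin m q (permF g η) = WLin m q η}

section Aux

open Finset

variable {m q : ℕ}

lemma pair_card_two {e x : Fin m} (h : e ≠ x) : ({e, x} : Finset (Fin m)).card = 2 := by
  rw [Finset.card_insert_of_notMem (by simp [h]), Finset.card_singleton]

/-- Pointwise value of the `D`-matrix numerator in terms of membership indicators. -/
lemma cval {e x : Fin m} (hne : e ≠ x) (r : OO m) :
    (if ({e, x} : Finset (Fin m)) = r.1 then -(m : ℚ) ^ 2 + 8 * m - 14
      else if (({e, x} : Finset (Fin m)) ∩ r.1).card = 1 then (m : ℚ) - 4 else -2)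
    = -2 + ((m : ℚ) - 2) * ((if e ∈ r.1 then (1 : ℚ) else 0) + (if x ∈ r.1 then (1 : ℚ) else 0))
      - ((m : ℚ) - 2) * ((m : ℚ) - 4) *
        ((if e ∈ r.1 then (1 : ℚ) else 0) * (if x ∈ r.1 then (1 : ℚ) else 0)) := by
  by_cases he : e ∈ r.1 <;> by_cases hx : x ∈ r.1
  · have heq : ({e, x} : Finset (Fin m)) = r.1 := by
      apply Finset.eq_of_subset_of_card_le
      · intro y hy
        rcases Finset.mem_insert.1 hy with rfl | hy
        · exact he
        · rw [Finset.mem_singleton.1 hy]; exact hx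
      · rw [pair_card_two hne, r.2]
    simp only [heq, if_pos rfl, he, hx, if_pos]
    ring
  · have hne' : ({e, x} : Finset (Fin m)) ≠ r.1 := fun h =>
      hx (h ▸ Finset.mem_insert_of_mem (Finset.mem_singleton_self x))
    have hint : ({e, x} : Finset (Fin m)) ∩ r.1 = {e} := by
      ext y
      simp only [Finset.mem_inter, Finset.mem_insert, Finset.mem_singleton]
      constructor
      · rintro ⟨rfl | rfl, hy⟩
        · rfl
        · exact absurd hy hx
      · rintro rfl; exact ⟨Or.inl rfl, he⟩
    simp only [hne', if_neg, hint, Finset.card_singleton, if_pos rfl, he, if_pos, hx, if_neg,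
      not_false_iff]
    ring
  · have hne' : ({e, x} : Finset (Fin m)) ≠ r.1 := fun h =>
      he (h ▸ Finset.mem_insert_self e {x})
    have hint : ({e, x} : Finset (Fin m)) ∩ r.1 = {x} := by
      ext y
      simp only [Finset.mem_inter, Finset.mem_insert, Finset.mem_singleton]
      constructor
      · rintro ⟨rfl | rfl, hy⟩
        · exact absurd hy he
        · rfl
      · rintro rfl; exact ⟨Or.inr rfl, hx⟩
    simp only [hne', if_neg, hint, Finset.card_singleton, if_pos rfl, he, if_neg, hx, if_pos,
      not_false_iff]
    ring
  · have hne' : ({e, x} : Finset (Fin m)) ≠ r.1 := fun h =>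
      he (h ▸ Finset.mem_insert_self e {x})
    have hint : ({e, x} : Finset (Fin m)) ∩ r.1 = ∅ := by
      ext y
      simp only [Finset.mem_inter, Finset.mem_insert, Finset.mem_singleton,
        Finset.notMem_empty, iff_false, not_and]
      rintro (rfl | rfl)
      · exact he
      · exact hx
    simp only [hne', if_neg, hint, Finset.card_empty, he, hx, if_neg, not_false_iff]
    norm_num

/-- Transfer a sum over 2-subsets `p` with `|p ∩ t| = 1` to a double sum over
`e ∈ t`, `x ∉ t`. -/
lemma sum_pairs (t : OO m) (f : Finset (Fin m) → ℚ) :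
    ∑ p : OO m, (if (p.1 ∩ t.1).card = 1 then f p.1 else 0)
      = ∑ e ∈ t.1, ∑ x ∈ t.1ᶜ, f {e, x} := by
  classical
  rw [← Finset.sum_filter, ← Finset.sum_product']
  refine (Finset.sum_bij (fun ex hex => (⟨{ex.1, ex.2}, ?_⟩ : OO m)) ?_ ?_ ?_ ?_).symm
  · obtain ⟨h1, h2⟩ := Finset.mem_product.1 hex
    exact pair_card_two fun h => (Finset.mem_compl.1 h2) (h ▸ h1)
  · intro ⟨e, x⟩ hex
    obtain ⟨h1, h2⟩ := Finset.mem_product.1 hex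
    rw [Finset.mem_compl] at h2
    simp only [Finset.mem_filter, Finset.mem_univ, true_and]
    have : ({e, x} : Finset (Fin m)) ∩ t.1 = {e} := by
      ext y
      simp only [Finset.mem_inter, Finset.mem_insert, Finset.mem_singleton]
      constructor
      · rintro ⟨rfl | rfl, hy⟩
        · rfl
        · exact absurd hy h2
      · rintro rfl; exact ⟨Or.inl rfl, h1⟩
    rw [this, Finset.card_singleton]
  · intro ⟨e, x⟩ hex ⟨e', x'⟩ hex' h
    obtain ⟨h1, h2⟩ := Finset.mem_product.1 hex
    obtain ⟨h1', h2'⟩ := Finset.mem_product.1 hex'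
    rw [Finset.mem_compl] at h2 h2'
    have hset : ({e, x} : Finset (Fin m)) = {e', x'} := congrArg Subtype.val h
    have he : e = e' := by
      have : e ∈ ({e', x'} : Finset (Fin m)) := hset ▸ Finset.mem_insert_self e {x}
      rcases Finset.mem_insert.1 this with h | h
      · exact h
      · exact absurd (Finset.mem_singleton.1 h ▸ h1) h2'
    have hx : x = x' := by
      have : x ∈ ({e', x'} : Finset (Fin m)) :=
        hset ▸ Finset.mem_insert_of_mem (Finset.mem_singleton_self x)
      rcases Finset.mem_insert.1 this with h | h
      · exact absurd (h ▸ h1') h2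
      · exact Finset.mem_singleton.1 h
    simp [he, hx]
  · intro p hp
    simp only [Finset.mem_filter, Finset.mem_univ, true_and] at hp
    obtain ⟨e, he⟩ := Finset.card_eq_one.1 hp
    have hsd : (p.1 \ t.1).card = 1 := by
      have h := Finset.card_inter_add_card_sdiff p.1 t.1
      rw [p.2] at h
      omega
    obtain ⟨x, hx⟩ := Finset.card_eq_one.1 hsd
    have hep : e ∈ p.1 ∩ t.1 := he ▸ Finset.mem_singleton_self e
    have hxp : x ∈ p.1 \ t.1 := hx ▸ Finset.mem_singleton_self x
    refine ⟨(e, x), ?_, ?_⟩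
    · exact Finset.mem_product.2 ⟨(Finset.mem_inter.1 hep).2,
        Finset.mem_compl.2 (Finset.mem_sdiff.1 hxp).2⟩
    · apply Subtype.ext
      show ({e, x} : Finset (Fin m)) = p.1
      have hu : p.1 \ t.1 ∪ p.1 ∩ t.1 = p.1 := Finset.sdiff_union_inter p.1 t.1
      rw [← hu, he, hx]
      ext y
      simp [or_comm]
  · intro a ha
    rfl

lemma sum_lin (s r : Finset (Fin m)) (A B : ℚ) :
    ∑ x ∈ s, (A + B * (if x ∈ r then (1 : ℚ) else 0))
      = (s.card : ℚ) * A + B * ((s ∩ r).card : ℚ) := by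
  rw [Finset.sum_add_distrib, Finset.sum_const, ← Finset.mul_sum, Finset.sum_boole,
    Finset.filter_mem_eq_inter, nsmul_eq_mul]

/-- The core counting identity. -/
lemma key_sum (hm3 : 3 ≤ m) (r t : OO m) :
    ∑ e ∈ t.1, ∑ x ∈ t.1ᶜ,
      (if ({e, x} : Finset (Fin m)) = r.1 then -(m : ℚ) ^ 2 + 8 * m - 14
        else if (({e, x} : Finset (Fin m)) ∩ r.1).card = 1 then (m : ℚ) - 4 else -2)
      = ((m : ℚ) - 2) * ((m : ℚ) - 4) *
          (((t.1 ∩ r.1).card : ℚ) * (((t.1 ∩ r.1).card : ℚ) - 1)) := by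
  classical
  have hcompl : (t.1ᶜ.card : ℚ) = (m : ℚ) - 2 := by
    have : t.1ᶜ.card = m - 2 := by
      rw [Finset.card_compl, t.2, Fintype.card_fin]
    rw [this]
    have : (2 : ℕ) ≤ m := le_trans (by norm_num) hm3
    push_cast [Nat.cast_sub this]
    ring
  have hv : ((t.1ᶜ ∩ r.1).card : ℚ) = 2 - ((t.1 ∩ r.1).card : ℚ) := by
    have h1 : (r.1 ∩ t.1).card + (r.1 \ t.1).card = 2 := by
      rw [Finset.card_inter_add_card_sdiff, r.2]
    have h2 : r.1 \ t.1 = r.1 ∩ t.1ᶜ := by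
      ext y; simp [Finset.mem_sdiff, Finset.mem_compl]
    have h1' : ((r.1 ∩ t.1).card : ℚ) + ((r.1 \ t.1).card : ℚ) = 2 := by exact_mod_cast h1
    rw [Finset.inter_comm t.1ᶜ r.1, ← h2, Finset.inter_comm t.1 r.1]
    linarith
  calc ∑ e ∈ t.1, ∑ x ∈ t.1ᶜ,
      (if ({e, x} : Finset (Fin m)) = r.1 then -(m : ℚ) ^ 2 + 8 * m - 14
        else if (({e, x} : Finset (Fin m)) ∩ r.1).card = 1 then (m : ℚ) - 4 else -2)
      = ∑ e ∈ t.1, ∑ x ∈ t.1ᶜ,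
          ((-2 + ((m : ℚ) - 2) * (if e ∈ r.1 then (1 : ℚ) else 0))
            + (((m : ℚ) - 2) - ((m : ℚ) - 2) * ((m : ℚ) - 4) * (if e ∈ r.1 then (1 : ℚ) else 0))
              * (if x ∈ r.1 then (1 : ℚ) else 0)) := by
        refine Finset.sum_congr rfl fun e he => Finset.sum_congr rfl fun x hx => ?_
        have hne : e ≠ x := fun h => (Finset.mem_compl.1 hx) (h ▸ he)
        rw [cval hne r]
        ring
    _ = ∑ e ∈ t.1,
          ((t.1ᶜ.card : ℚ) * (-2 + ((m : ℚ) - 2) * (if e ∈ r.1 then (1 : ℚ) else 0))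
            + (((m : ℚ) - 2) - ((m : ℚ) - 2) * ((m : ℚ) - 4) * (if e ∈ r.1 then (1 : ℚ) else 0))
              * ((t.1ᶜ ∩ r.1).card : ℚ)) := by
        refine Finset.sum_congr rfl fun e he => ?_
        exact sum_lin t.1ᶜ r.1 _ _
    _ = ∑ e ∈ t.1,
          (((t.1ᶜ.card : ℚ) * (-2) + ((m : ℚ) - 2) * ((t.1ᶜ ∩ r.1).card : ℚ))
            + (((m : ℚ) - 2) * (t.1ᶜ.card : ℚ)
              - ((m : ℚ) - 2) * ((m : ℚ) - 4) * ((t.1ᶜ ∩ r.1).card : ℚ))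
              * (if e ∈ r.1 then (1 : ℚ) else 0)) := by
        refine Finset.sum_congr rfl fun e he => ?_
        ring
    _ = (t.1.card : ℚ) * ((t.1ᶜ.card : ℚ) * (-2) + ((m : ℚ) - 2) * ((t.1ᶜ ∩ r.1).card : ℚ))
          + (((m : ℚ) - 2) * (t.1ᶜ.card : ℚ)
              - ((m : ℚ) - 2) * ((m : ℚ) - 4) * ((t.1ᶜ ∩ r.1).card : ℚ))
            * ((t.1 ∩ r.1).card : ℚ) := sum_lin t.1 r.1 _ _
    _ = _ := by
        rw [hcompl, hv, t.2]
        push_cast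
        ring

end Aux
section Aux2

variable {m q : ℕ}

lemma pairPart_mem (hm3 : 3 ≤ m) (hq : 2 ≤ q) (p : OO m) :
    ({p.1, p.1ᶜ} : Ptn m) ∈ Pset m q := by
  refine ⟨⟨?_, ?_⟩, ?_⟩
  · intro c hc
    rcases Finset.mem_insert.1 hc with rfl | hc
    · exact Finset.card_pos.1 (by rw [p.2]; norm_num)
    · rw [Finset.mem_singleton.1 hc]
      apply Finset.card_pos.1
      rw [Finset.card_compl, p.2, Fintype.card_fin]
      omega
  · intro i
    by_cases hi : i ∈ p.1
    · refine ⟨p.1, ⟨Finset.mem_insert_self _ _, hi⟩, ?_⟩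
      rintro c ⟨hc, hic⟩
      rcases Finset.mem_insert.1 hc with rfl | hc
      · rfl
      · rw [Finset.mem_singleton.1 hc] at hic
        exact absurd hi (Finset.mem_compl.1 hic)
    · refine ⟨p.1ᶜ, ⟨Finset.mem_insert_of_mem (Finset.mem_singleton_self _),
        Finset.mem_compl.2 hi⟩, ?_⟩
      rintro c ⟨hc, hic⟩
      rcases Finset.mem_insert.1 hc with rfl | hc
      · exact absurd hic hi
      · exact Finset.mem_singleton.1 hc
  · exact le_trans (le_trans (Finset.card_insert_le _ _)
      (by rw [Finset.card_singleton])) hq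

lemma delta_pair (p t : OO m) (h : ({p.1, p.1ᶜ} : Ptn m) ∈ Pset m q) :
    Delta (⟨{p.1, p.1ᶜ}, h⟩ : PP m q) t = if (p.1 ∩ t.1).card = 1 then 1 else 0 := by
  unfold Delta
  by_cases hc : (p.1 ∩ t.1).card = 1
  · rw [if_pos hc, if_neg]
    rintro ⟨c, hcmem, hsub⟩
    rcases Finset.mem_insert.1 hcmem with rfl | hcmem
    · have ht : t.1 = p.1 := Finset.eq_of_subset_of_card_le hsub (by rw [t.2, p.2])
      rw [ht, Finset.inter_self, p.2] at hc
      exact absurd hc (by norm_num)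
    · rw [Finset.mem_singleton.1 hcmem] at hsub
      have : p.1 ∩ t.1 = ∅ := Finset.eq_empty_of_forall_notMem fun y hy =>
        (Finset.mem_compl.1 (hsub (Finset.mem_inter.1 hy).2)) (Finset.mem_inter.1 hy).1
      rw [this] at hc
      simp at hc
  · rw [if_neg hc, if_pos]
    have hle : (p.1 ∩ t.1).card ≤ 2 := by
      have h2 := Finset.card_le_card (Finset.inter_subset_left : p.1 ∩ t.1 ⊆ p.1)
      rwa [p.2] at h2
    have h02 : (p.1 ∩ t.1).card = 0 ∨ (p.1 ∩ t.1).card = 2 := by omega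
    rcases h02 with h0 | h2
    · have hint : p.1 ∩ t.1 = ∅ := Finset.card_eq_zero.1 h0
      refine ⟨p.1ᶜ, Finset.mem_insert_of_mem (Finset.mem_singleton_self _), fun y hy => ?_⟩
      exact Finset.mem_compl.2 fun hyp =>
        Finset.eq_empty_iff_forall_notMem.1 hint y (Finset.mem_inter.2 ⟨hyp, hy⟩)
    · have hit : p.1 ∩ t.1 = t.1 :=
        Finset.eq_of_subset_of_card_le Finset.inter_subset_right (by simp [t.2, h2])
      refine ⟨p.1, Finset.mem_insert_self _ _, fun y hy => ?_⟩
      rw [← hit] at hy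
      exact (Finset.mem_inter.1 hy).1

lemma sum_alpha (hm3 : 3 ≤ m) (hq : 2 ≤ q) (p t : OO m) :
    ∑ α : PP m q, (if α.1 = ({p.1, p.1ᶜ} : Ptn m) then (1 : ℚ) else 0) * Delta α t
      = if (p.1 ∩ t.1).card = 1 then 1 else 0 := by
  classical
  rw [Finset.sum_eq_single (⟨{p.1, p.1ᶜ}, pairPart_mem hm3 hq p⟩ : PP m q)]
  · rw [if_pos rfl, one_mul, delta_pair]
  · intro b _ hb
    have hb1 : b.1 ≠ ({p.1, p.1ᶜ} : Ptn m) := fun h => hb (Subtype.ext h)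
    rw [if_neg hb1, zero_mul]
  · intro h
    exact absurd (Finset.mem_univ _) h

/-- `D · B = 1`. -/
lemma D_mul_B (hm : 5 ≤ m ∨ m = 3) (r t : OO m) :
    ∑ p : OO m, Dmat m r p * (if (p.1 ∩ t.1).card = 1 then (1 : ℚ) else 0)
      = if r = t then 1 else 0 := by
  classical
  have hm3 : 3 ≤ m := by omega
  have h2 : ((m : ℚ) - 2) ≠ 0 := by
    rcases hm with h | h
    · have : (5 : ℚ) ≤ (m : ℚ) := by exact_mod_cast h
      intro hc; linarith
    · subst h; norm_num
  have h4 : ((m : ℚ) - 4) ≠ 0 := by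
    rcases hm with h | h
    · have : (5 : ℚ) ≤ (m : ℚ) := by exact_mod_cast h
      intro hc; linarith
    · subst h; norm_num
  have hD : ∀ p : OO m, Dmat m r p =
      (if p.1 = r.1 then -(m : ℚ) ^ 2 + 8 * m - 14
        else if (p.1 ∩ r.1).card = 1 then (m : ℚ) - 4 else -2) /
        (2 * ((m : ℚ) - 2) * ((m : ℚ) - 4)) := by
    intro p
    show (if r = p then -(m : ℚ) ^ 2 + 8 * m - 14
        else if (r.1 ∩ p.1).card = 1 then (m : ℚ) - 4 else -2) / _ = _
    by_cases hrp : r = p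
    · subst hrp
      rw [if_pos rfl, if_pos rfl]
    · rw [if_neg hrp, if_neg (fun h : p.1 = r.1 => hrp (Subtype.ext h.symm)),
        Finset.inter_comm]
  calc ∑ p : OO m, Dmat m r p * (if (p.1 ∩ t.1).card = 1 then (1 : ℚ) else 0)
      = (∑ p : OO m, (if (p.1 ∩ t.1).card = 1 then
          (if p.1 = r.1 then -(m : ℚ) ^ 2 + 8 * m - 14
            else if (p.1 ∩ r.1).card = 1 then (m : ℚ) - 4 else -2) else 0)) /
          (2 * ((m : ℚ) - 2) * ((m : ℚ) - 4)) := by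
        rw [Finset.sum_div]
        refine Finset.sum_congr rfl fun p _ => ?_
        rw [hD p]
        by_cases hpt : (p.1 ∩ t.1).card = 1
        · rw [if_pos hpt, if_pos hpt, mul_one]
        · rw [if_neg hpt, if_neg hpt, mul_zero, zero_div]
    _ = (∑ e ∈ t.1, ∑ x ∈ t.1ᶜ,
          (if ({e, x} : Finset (Fin m)) = r.1 then -(m : ℚ) ^ 2 + 8 * m - 14
            else if (({e, x} : Finset (Fin m)) ∩ r.1).card = 1 then (m : ℚ) - 4 else -2)) /
          (2 * ((m : ℚ) - 2) * ((m : ℚ) - 4)) := by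
        rw [sum_pairs t (fun s => if s = r.1 then -(m : ℚ) ^ 2 + 8 * m - 14
            else if (s ∩ r.1).card = 1 then (m : ℚ) - 4 else -2)]
    _ = (((m : ℚ) - 2) * ((m : ℚ) - 4) *
          (((t.1 ∩ r.1).card : ℚ) * (((t.1 ∩ r.1).card : ℚ) - 1))) /
          (2 * ((m : ℚ) - 2) * ((m : ℚ) - 4)) := by
        rw [key_sum hm3 r t]
    _ = ((t.1 ∩ r.1).card : ℚ) * (((t.1 ∩ r.1).card : ℚ) - 1) / 2 := by
        field_simp
    _ = if r = t then 1 else 0 := by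
        by_cases hrt : r = t
        · subst hrt
          rw [Finset.inter_self, r.2, if_pos rfl]
          norm_num
        · rw [if_neg hrt]
          have hle : (t.1 ∩ r.1).card ≤ 1 := by
            by_contra hgt
            push_neg at hgt
            have hle2 : (t.1 ∩ r.1).card ≤ 2 := by
              have h2' := Finset.card_le_card (Finset.inter_subset_left : t.1 ∩ r.1 ⊆ t.1)
              rwa [t.2] at h2'
            have h2' : (t.1 ∩ r.1).card = 2 := by omega
            have ht : t.1 ∩ r.1 = t.1 :=
              Finset.eq_of_subset_of_card_le Finset.inter_subset_left (by simp [t.2, h2'])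
            have hr : t.1 ∩ r.1 = r.1 :=
              Finset.eq_of_subset_of_card_le Finset.inter_subset_right (by simp [r.2, h2'])
            exact hrt (Subtype.ext (hr.symm.trans ht))
          interval_cases h : (t.1 ∩ r.1).card <;> norm_num
end Aux2
/-- for `q ≥ 2` and `m ≥ 5` or `m = 3`, `W(ξ_x) = x` for every
`x ∈ F(O,ℚ)`; in particular `W` is surjective. -/
theorem W_xi_eq_self (m q : ℕ) (hq : 2 ≤ q) (hm : 5 ≤ m ∨ m = 3) :
    (∀ x : OO m → ℚ, WLin m q (xi m q x) = x) ∧ Function.Surjective (WLin m q) := by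
  have hm3 : 3 ≤ m := by omega
  have main : ∀ x : OO m → ℚ, WLin m q (xi m q x) = x := by
    intro x
    funext t
    show ∑ α : PP m q, xi m q x α * Delta α t = x t
    simp only [xi]
    have step : ∀ r : OO m,
        ∑ α : PP m q, (x r * ∑ p : OO m, Dmat m r p *
            (if α.1 = ({p.1, p.1ᶜ} : Ptn m) then (1 : ℚ) else 0)) * Delta α t
        = x r * (if r = t then 1 else 0) := by
      intro r
      calc ∑ α : PP m q, (x r * ∑ p : OO m, Dmat m r p *
              (if α.1 = ({p.1, p.1ᶜ} : Ptn m) then (1 : ℚ) else 0)) * Delta α t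
          = ∑ α : PP m q, ∑ p : OO m, x r * (Dmat m r p *
              ((if α.1 = ({p.1, p.1ᶜ} : Ptn m) then (1 : ℚ) else 0) * Delta α t)) := by
            refine Finset.sum_congr rfl fun α _ => ?_
            rw [Finset.mul_sum, Finset.sum_mul]
            exact Finset.sum_congr rfl fun p _ => by ring
        _ = ∑ p : OO m, ∑ α : PP m q, x r * (Dmat m r p *
              ((if α.1 = ({p.1, p.1ᶜ} : Ptn m) then (1 : ℚ) else 0) * Delta α t)) :=
            Finset.sum_comm
        _ = ∑ p : OO m, x r * (Dmat m r p *
              ∑ α : PP m q, (if α.1 = ({p.1, p.1ᶜ} : Ptn m) then (1 : ℚ) else 0) * Delta α t) := by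
            refine Finset.sum_congr rfl fun p _ => ?_
            rw [Finset.mul_sum, Finset.mul_sum]
        _ = ∑ p : OO m, x r * (Dmat m r p * (if (p.1 ∩ t.1).card = 1 then (1 : ℚ) else 0)) := by
            refine Finset.sum_congr rfl fun p _ => ?_
            rw [sum_alpha hm3 hq p t]
        _ = x r * ∑ p : OO m, Dmat m r p * (if (p.1 ∩ t.1).card = 1 then (1 : ℚ) else 0) := by
            rw [Finset.mul_sum]
        _ = x r * (if r = t then 1 else 0) := by rw [D_mul_B hm r t]
    calc ∑ α : PP m q, (∑ r : OO m, x r * ∑ p : OO m, Dmat m r p *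
            (if α.1 = ({p.1, p.1ᶜ} : Ptn m) then (1 : ℚ) else 0)) * Delta α t
        = ∑ α : PP m q, ∑ r : OO m, (x r * ∑ p : OO m, Dmat m r p *
            (if α.1 = ({p.1, p.1ᶜ} : Ptn m) then (1 : ℚ) else 0)) * Delta α t := by
          refine Finset.sum_congr rfl fun α _ => ?_
          rw [Finset.sum_mul]
      _ = ∑ r : OO m, ∑ α : PP m q, (x r * ∑ p : OO m, Dmat m r p *
            (if α.1 = ({p.1, p.1ᶜ} : Ptn m) then (1 : ℚ) else 0)) * Delta α t :=
          Finset.sum_comm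
      _ = ∑ r : OO m, x r * (if r = t then 1 else 0) := Finset.sum_congr rfl fun r _ => step r
      _ = x t := by
          simp only [mul_ite, mul_one, mul_zero]
          rw [Finset.sum_ite_eq' Finset.univ t x]
          simp
  exact ⟨main, fun x => ⟨xi m q x, main x⟩⟩
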